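/- Let 0 < ε ≤ 1/3, let a₀ > 0, and let Q and Q₀ be 3×3 real symmetric traceless matrices with λ_min(Q) ≥ −1/3 + ε and λ_min(Q₀) ≥ −1/3 + ε. Set L = a₀(Q + (1/3)I), L₀ = a₀(Q₀ + (1/3)I), and for any 3×3 real matrix F set G = L^{-1/2} F L₀^{1/2}. Then |G| ≥ √ε · |F|. -/

import Mathlib

open Matrix

/-- Frobenius norm of a 3×3 real matrix: |M| = √(tr(Mᵀ M)). -/
noncomputable def frobNorm (M : Matrix (Fin 3) (Fin 3) ℝ) : ℝ :=
  Real.sqrt (Matrix.trace (Mᵀ * M))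

/-- Smallest eigenvalue of a symmetric (Hermitian) real matrix. -/
noncomputable def lMin {M : Matrix (Fin 3) (Fin 3) ℝ} (h : M.IsHermitian) : ℝ :=
  ⨅ i, h.eigenvalues i

/-- Largest eigenvalue of a symmetric (Hermitian) real matrix. -/
noncomputable def lMax {M : Matrix (Fin 3) (Fin 3) ℝ} (h : M.IsHermitian) : ℝ :=
  ⨆ i, h.eigenvalues i

/-- The unique symmetric positive (semi)definite square root of a positive definite matrix. -/
noncomputable def msqrt {M : Matrix (Fin 3) (Fin 3) ℝ} (h : M.PosDef) : Matrix (Fin 3) (Fin 3) ℝ :=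
  (h.posSemidef.1.eigenvectorUnitary : Matrix (Fin 3) (Fin 3) ℝ) *
    diagonal ((↑) ∘ (√·) ∘ h.posSemidef.1.eigenvalues) *
    (star h.posSemidef.1.eigenvectorUnitary : Matrix (Fin 3) (Fin 3) ℝ)


section Aux
variable {n : Type*} [Fintype n] [DecidableEq n]

noncomputable def mySq {D : Matrix n n ℝ} (hD : D.PosSemidef) : Matrix n n ℝ :=
  (hD.1.eigenvectorUnitary : Matrix n n ℝ) *
    diagonal ((↑) ∘ (√·) ∘ hD.1.eigenvalues) *
    (star hD.1.eigenvectorUnitary : Matrix n n ℝ)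

lemma mySq_mul_self {D : Matrix n n ℝ} (hD : D.PosSemidef) : mySq hD * mySq hD = D := by
  have hU : (star hD.1.eigenvectorUnitary : Matrix n n ℝ) * (hD.1.eigenvectorUnitary : Matrix n n ℝ) = 1 := by
    rw [← Unitary.coe_star_mul_self]
  have hd : diagonal ((↑) ∘ (√·) ∘ hD.1.eigenvalues) * diagonal ((↑) ∘ (√·) ∘ hD.1.eigenvalues)
      = diagonal (RCLike.ofReal ∘ hD.1.eigenvalues : n → ℝ) := by
    rw [diagonal_mul_diagonal]; congr 1; funext i
    simp [Real.mul_self_sqrt (hD.eigenvalues_nonneg i)]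
  conv_rhs => rw [hD.1.spectral_theorem, Unitary.conjStarAlgAut_apply]
  unfold mySq
  rw [show ∀ A B C E : Matrix n n ℝ, A * B * C * (E * B * C) = A * (B * (C * E) * B) * C by
    intro A B C E; simp only [Matrix.mul_assoc], hU, Matrix.mul_one, hd]

lemma posSemidef_mySq {D : Matrix n n ℝ} (hD : D.PosSemidef) : (mySq hD).PosSemidef := by
  have := (Matrix.posSemidef_diagonal_iff.mpr fun i => Real.sqrt_nonneg (hD.1.eigenvalues i)).mul_mul_conjTranspose_same
    (hD.1.eigenvectorUnitary : Matrix n n ℝ)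
  unfold mySq
  convert this using 2 <;> rfl

lemma myTraceNonneg {M : Matrix n n ℝ} (hM : M.PosSemidef) : 0 ≤ M.trace := by
  rw [Matrix.trace]
  refine Finset.sum_nonneg fun i _ => ?_
  exact hM.diag_nonneg

lemma mySmulPSD {M : Matrix n n ℝ} (hM : M.PosSemidef) {c : ℝ} (hc : 0 ≤ c) :
    (c • M).PosSemidef := by
  exact hM.smul hc

lemma myTraceMulNonneg {P D : Matrix n n ℝ} (hP : P.PosSemidef) (hD : D.PosSemidef) :
    0 ≤ (P * D).trace := by
  have hR : mySq hD * mySq hD = D := mySq_mul_self hD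
  have hRH := posSemidef_mySq hD
  have : (P * D).trace = ((mySq hD)ᴴ * P * mySq hD).trace := by
    rw [hRH.1.eq]
    conv_lhs => rw [← hR, ← Matrix.mul_assoc]
    rw [Matrix.trace_mul_cycle]
  rw [this]
  exact myTraceNonneg (hP.conjTranspose_mul_mul_same _)

lemma myTraceEig {M : Matrix n n ℝ} (hM : M.IsHermitian) :
    M.trace = ∑ i, hM.eigenvalues i := by
  conv_lhs => rw [hM.spectral_theorem, Unitary.conjStarAlgAut_apply]
  rw [Matrix.trace_mul_cycle]
  rw [(Matrix.mem_unitaryGroup_iff'.mp hM.eigenvectorUnitary.2)]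
  simp [RCLike.ofReal_real_eq_id, Matrix.trace_diagonal]

lemma myShiftLB {M : Matrix n n ℝ} (hM : M.IsHermitian) (c : ℝ)
    (h : ∀ i, c ≤ hM.eigenvalues i) : (M - c • 1).PosSemidef := by
  have key : M - c • 1 =
      (hM.eigenvectorUnitary : Matrix n n ℝ) * diagonal (fun i => hM.eigenvalues i - c) *
        ((hM.eigenvectorUnitary : Matrix n n ℝ))ᴴ := by
    have h1 : (hM.eigenvectorUnitary : Matrix n n ℝ) * ((hM.eigenvectorUnitary : Matrix n n ℝ))ᴴ
        = 1 := by
      simpa [Matrix.star_eq_conjTranspose] using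
        Matrix.mem_unitaryGroup_iff.mp hM.eigenvectorUnitary.2
    have h2 := hM.spectral_theorem
    rw [Unitary.conjStarAlgAut_apply] at h2
    have hdiag : diagonal (fun i => hM.eigenvalues i - c)
        = diagonal (RCLike.ofReal ∘ hM.eigenvalues) - c • (1 : Matrix n n ℝ) := by
      simp [RCLike.ofReal_real_eq_id, Matrix.smul_one_eq_diagonal, Matrix.diagonal_sub]
    rw [hdiag, Matrix.mul_sub, Matrix.sub_mul, ← Matrix.star_eq_conjTranspose, ← h2]
    congr 1
    rw [Matrix.mul_smul, Matrix.smul_mul, Matrix.mul_one]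
    rw [Matrix.star_eq_conjTranspose, h1]
  rw [key]
  exact (Matrix.PosSemidef.diagonal fun i => sub_nonneg.2 (h i)).mul_mul_conjTranspose_same _

lemma myShiftUB {M : Matrix n n ℝ} (hM : M.IsHermitian) (c : ℝ)
    (h : ∀ i, hM.eigenvalues i ≤ c) : (c • 1 - M).PosSemidef := by
  have key : c • (1 : Matrix n n ℝ) - M =
      (hM.eigenvectorUnitary : Matrix n n ℝ) * diagonal (fun i => c - hM.eigenvalues i) *
        ((hM.eigenvectorUnitary : Matrix n n ℝ))ᴴ := by
    have h1 : (hM.eigenvectorUnitary : Matrix n n ℝ) * ((hM.eigenvectorUnitary : Matrix n n ℝ))ᴴ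
        = 1 := by
      simpa [Matrix.star_eq_conjTranspose] using
        Matrix.mem_unitaryGroup_iff.mp hM.eigenvectorUnitary.2
    have h2 := hM.spectral_theorem
    rw [Unitary.conjStarAlgAut_apply] at h2
    have hdiag : diagonal (fun i => c - hM.eigenvalues i)
        = c • (1 : Matrix n n ℝ) - diagonal (RCLike.ofReal ∘ hM.eigenvalues) := by
      simp [RCLike.ofReal_real_eq_id, Matrix.smul_one_eq_diagonal, Matrix.diagonal_sub]
    rw [hdiag, Matrix.mul_sub, Matrix.sub_mul, ← Matrix.star_eq_conjTranspose, ← h2]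
    congr 1
    rw [Matrix.mul_smul, Matrix.smul_mul, Matrix.mul_one]
    rw [Matrix.star_eq_conjTranspose, h1]
  rw [key]
  exact (Matrix.PosSemidef.diagonal fun i => sub_nonneg.2 (h i)).mul_mul_conjTranspose_same _

end Aux

theorem stmt8 (ε a0 : ℝ) (hε : 0 < ε) (hε3 : ε ≤ 1 / 3) (ha0 : 0 < a0)
    (Q Q0 L L0 F : Matrix (Fin 3) (Fin 3) ℝ)
    (hQ : Q.IsHermitian) (htrQ : Q.trace = 0) (hminQ : -1 / 3 + ε ≤ lMin hQ)
    (hQ0 : Q0.IsHermitian) (htrQ0 : Q0.trace = 0) (hminQ0 : -1 / 3 + ε ≤ lMin hQ0)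
    (hLdef : L = a0 • (Q + (1 / 3 : ℝ) • (1 : Matrix (Fin 3) (Fin 3) ℝ)))
    (hL0def : L0 = a0 • (Q0 + (1 / 3 : ℝ) • (1 : Matrix (Fin 3) (Fin 3) ℝ)))
    (hL : L.PosDef) (hL0 : L0.PosDef) :
    Real.sqrt ε * frobNorm F ≤ frobNorm ((msqrt hL)⁻¹ * F * msqrt hL0) := by
  set S := msqrt hL with hSdef
  set S0 := msqrt hL0 with hS0def
  have hS : S * S = L := mySq_mul_self hL.posSemidef
  have hS0 : S0 * S0 = L0 := mySq_mul_self hL0.posSemidef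
  have hSps := posSemidef_mySq hL.posSemidef
  have hS0ps := posSemidef_mySq hL0.posSemidef
  have hSt : Sᵀ = S := by
    rw [← Matrix.conjTranspose_eq_transpose_of_trivial]; exact hSps.1.eq
  have hS0t : S0ᵀ = S0 := by
    rw [← Matrix.conjTranspose_eq_transpose_of_trivial]; exact hS0ps.1.eq
  -- invertibility of S
  have hdetL : 0 < L.det := hL.det_pos
  have hdetS : IsUnit S.det := by
    refine isUnit_iff_ne_zero.mpr fun h => ?_
    rw [← hS, Matrix.det_mul, h, mul_zero] at hdetL
    exact lt_irrefl _ hdetL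
  have hTS : S⁻¹ * S = 1 := Matrix.nonsing_inv_mul S hdetS
  have hST : S * S⁻¹ = 1 := Matrix.mul_nonsing_inv S hdetS
  have hTt : (S⁻¹)ᵀ = S⁻¹ := by rw [Matrix.transpose_nonsing_inv, hSt]
  have hTH : (S⁻¹)ᴴ = S⁻¹ := by
    rw [Matrix.conjTranspose_eq_transpose_of_trivial, hTt]
  have hTT : S⁻¹ * S⁻¹ = L⁻¹ := by rw [← hS, Matrix.mul_inv_rev]
  -- eigenvalue bounds
  have hQlow : ∀ i, -1 / 3 + ε ≤ hQ.eigenvalues i := fun i =>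
    le_trans hminQ (ciInf_le (Finite.bddBelow_range _) i)
  have hQ0low : ∀ i, -1 / 3 + ε ≤ hQ0.eigenvalues i := fun i =>
    le_trans hminQ0 (ciInf_le (Finite.bddBelow_range _) i)
  have hQsum : hQ.eigenvalues 0 + hQ.eigenvalues 1 + hQ.eigenvalues 2 = 0 := by
    have := myTraceEig hQ
    rw [htrQ, Fin.sum_univ_three] at this
    linarith [this]
  have hQhigh : ∀ i, hQ.eigenvalues i ≤ 2 / 3 := by
    intro i
    have h0 := hQlow 0; have h1 := hQlow 1; have h2 := hQlow 2
    fin_cases i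
    · exact (show hQ.eigenvalues 0 ≤ 2 / 3 by linarith)
    · exact (show hQ.eigenvalues 1 ≤ 2 / 3 by linarith)
    · exact (show hQ.eigenvalues 2 ≤ 2 / 3 by linarith)
  -- PSD shifts
  have hB1 : (L0 - (a0 * ε) • 1).PosSemidef := by
    have h := myShiftLB hQ0 (ε - 1 / 3) (fun i => by have := hQ0low i; linarith)
    have heq : L0 - (a0 * ε) • (1 : Matrix (Fin 3) (Fin 3) ℝ)
        = a0 • (Q0 - (ε - 1 / 3) • 1) := by rw [hL0def]; module
    rw [heq]; exact mySmulPSD h ha0.le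
  have hC : (a0 • (1 : Matrix (Fin 3) (Fin 3) ℝ) - L).PosSemidef := by
    have h := myShiftUB hQ (2 / 3) hQhigh
    have heq : a0 • (1 : Matrix (Fin 3) (Fin 3) ℝ) - L
        = a0 • ((2 / 3 : ℝ) • 1 - Q) := by rw [hLdef]; module
    rw [heq]; exact mySmulPSD h ha0.le
  have hA1 : (L⁻¹ - a0⁻¹ • 1).PosSemidef := by
    have key : L⁻¹ - a0⁻¹ • (1 : Matrix (Fin 3) (Fin 3) ℝ)
        = a0⁻¹ • (S⁻¹ * (a0 • (1 : Matrix (Fin 3) (Fin 3) ℝ) - L) * (S⁻¹)ᴴ) := by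
      rw [hTH, ← hTT]
      have e1 : S⁻¹ * (a0 • (1 : Matrix (Fin 3) (Fin 3) ℝ) - L) * S⁻¹
          = a0 • (S⁻¹ * S⁻¹) - 1 := by
        conv_lhs => rw [← hS]
        simp only [Matrix.mul_sub, Matrix.sub_mul, Matrix.mul_smul, Matrix.smul_mul,
          Matrix.mul_one, Matrix.mul_assoc, hST, hTS]
      rw [e1, smul_sub, smul_smul, inv_mul_cancel₀ (ne_of_gt ha0), one_smul]
    rw [key]
    exact mySmulPSD (hC.mul_mul_conjTranspose_same _) (inv_nonneg.mpr ha0.le)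
  -- PSD of P and FᵀF
  set P := F * L0 * Fᵀ with hPdef
  have hPps : P.PosSemidef := by
    have := hL0.posSemidef.mul_mul_conjTranspose_same F
    rwa [Matrix.conjTranspose_eq_transpose_of_trivial] at this
  have hFF : (Fᵀ * F).PosSemidef := by
    have := Matrix.posSemidef_conjTranspose_mul_self F
    rwa [Matrix.conjTranspose_eq_transpose_of_trivial] at this
  -- trace identities
  have htrP : P.trace = (Fᵀ * F * L0).trace := by
    rw [hPdef, Matrix.trace_mul_cycle]
  have key1 : 0 ≤ ((L⁻¹ - a0⁻¹ • 1) * P).trace := myTraceMulNonneg hA1 hPps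
  have key2 : 0 ≤ ((L0 - (a0 * ε) • 1) * (Fᵀ * F)).trace := myTraceMulNonneg hB1 hFF
  rw [Matrix.sub_mul, Matrix.trace_sub, Matrix.smul_mul, Matrix.trace_smul, Matrix.one_mul,
    smul_eq_mul, sub_nonneg] at key1 key2
  -- trace of GᵀG
  have hGG : (((S⁻¹ * F * S0)ᵀ) * (S⁻¹ * F * S0)).trace = (L⁻¹ * P).trace := by
    have e : ((S⁻¹ * F * S0)ᵀ) * (S⁻¹ * F * S0)
        = S0 * (Fᵀ * (L⁻¹ * (F * S0))) := by
      simp only [Matrix.transpose_mul, hS0t, hTt, Matrix.mul_assoc, ← hTT]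
    rw [e, Matrix.trace_mul_comm, hPdef]
    simp only [Matrix.mul_assoc, hS0]
    rw [Matrix.trace_mul_comm]
    simp only [Matrix.mul_assoc]
  -- combine
  have htrFF : 0 ≤ (Fᵀ * F).trace := myTraceNonneg hFF
  have hchain : ε * (Fᵀ * F).trace ≤ (((S⁻¹ * F * S0)ᵀ) * (S⁻¹ * F * S0)).trace := by
    rw [hGG]
    have h1 : a0⁻¹ * P.trace ≤ (L⁻¹ * P).trace := key1
    have h2 : a0 * ε * (Fᵀ * F).trace ≤ P.trace := by
      rw [htrP, Matrix.trace_mul_comm (Fᵀ * F) L0]; exact key2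
    have ha0' : 0 < a0⁻¹ := inv_pos.mpr ha0
    have h3 := mul_le_mul_of_nonneg_left h2 ha0'.le
    have e : a0⁻¹ * (a0 * ε * (Fᵀ * F).trace) = ε * (Fᵀ * F).trace := by
      field_simp
    linarith [h1, h3, e.symm.le, e.le]
  -- conclude
  unfold frobNorm
  rw [← Real.sqrt_mul hε.le]
  exact Real.sqrt_le_sqrt hchain
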